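/- (Lemma 3.3) Assume a₂₂ < 0 and a₃₃ > 0, and set q = a₂ − (a₂₃/a₃₃)a₃, so that ⟨q,q⟩ = a₂₂/a₃₃ < 0. Then the vector k = a₂/√(−a₂₂) + q/√(−⟨q,q⟩), representing the midpoint K of the segment A₂Q, satisfies ⟨k,k⟩ = −2·(1 + √(1/a₃₃)). -/

import Mathlib

open Real Matrix

/-- The Coxeter–Schläfli matrix of the complete orthoscheme `W_{uvw}`. -/
noncomputable def CSmatrix (u v w : ℝ) : Matrix (Fin 4) (Fin 4) ℝ :=
  !![1, -cos (π/u), 0, 0;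
     -cos (π/u), 1, -cos (π/v), 0;
     0, -cos (π/v), 1, -cos (π/w);
     0, 0, -cos (π/w), 1]

/-- The inverse of the Coxeter–Schläfli matrix; its entries are the `a_{ij}`. -/
noncomputable def CSinv (u v w : ℝ) : Matrix (Fin 4) (Fin 4) ℝ :=
  (CSmatrix u v w)⁻¹

lemma CSinv_symm (u v w : ℝ) : (CSinv u v w)ᵀ = CSinv u v w := by
  rw [CSinv, Matrix.transpose_nonsing_inv]
  congr 1
  ext i j
  fin_cases i <;> fin_cases j <;>
    simp [CSmatrix, Matrix.vecHead, Matrix.vecTail]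

theorem stmt5 (u v w : ℝ) (hu : 3 ≤ u) (hv : 3 ≤ v) (hw : 3 ≤ w)
    (hdet : (CSmatrix u v w).det ≠ 0)
    {V : Type*} [AddCommGroup V] [Module ℝ V]
    (Bf : LinearMap.BilinForm ℝ V)
    (hsymm : ∀ x y : V, Bf x y = Bf y x)
    (a : Fin 4 → V)
    (hGram : ∀ i j : Fin 4, Bf (a i) (a j) = CSinv u v w i j)
    (h22 : CSinv u v w 2 2 < 0) (h33 : 0 < CSinv u v w 3 3)
    (q : V) (hq : q = a 2 - (CSinv u v w 2 3 / CSinv u v w 3 3) • a 3)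
    (k : V)
    (hk : k = (Real.sqrt (-(CSinv u v w 2 2)))⁻¹ • a 2 + (Real.sqrt (-(Bf q q)))⁻¹ • q) :
    Bf q q = CSinv u v w 2 2 / CSinv u v w 3 3 ∧
    Bf q q < 0 ∧
    Bf k k = -2 * (1 + Real.sqrt (1 / CSinv u v w 3 3)) := by
  have hisU : IsUnit (CSmatrix u v w).det := isUnit_iff_ne_zero.mpr hdet
  have hAb : CSinv u v w * CSmatrix u v w = 1 := Matrix.nonsing_inv_mul _ hisU
  have hbA : CSmatrix u v w * CSinv u v w = 1 := Matrix.mul_nonsing_inv _ hisU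
  have e1 := congrFun (congrFun hAb 2) 3
  have e2 := congrFun (congrFun hbA 3) 3
  simp [Matrix.mul_apply, Fin.sum_univ_four, CSmatrix, Matrix.one_apply] at e1 e2
  have hsym32 : CSinv u v w 3 2 = CSinv u v w 2 3 := by
    have := congrFun (congrFun (CSinv_symm u v w) 2) 3
    simpa using this
  set A22 : ℝ := CSinv u v w 2 2 with hA22
  set A23 : ℝ := CSinv u v w 2 3 with hA23
  set A33 : ℝ := CSinv u v w 3 3 with hA33
  set c : ℝ := Real.cos (π / w) with hc
  have h23 : A23 = c * A22 := by linarith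
  have h33e : A33 = 1 + c * (c * A22) := by rw [h23] at e2; linarith
  clear_value A22 A23 A33 c
  have hA33ne : A33 ≠ 0 := ne_of_gt h33
  have hne : (1 + c * (c * A22)) ≠ 0 := h33e ▸ hA33ne
  -- value of Bf q q
  have hqq : Bf q q = A22 / A33 := by
    rw [hq]
    simp only [map_sub, _root_.map_smul, LinearMap.sub_apply, LinearMap.smul_apply,
      smul_eq_mul, hGram, hsym32, ← hA22, ← hA23, ← hA33]
    rw [h23, h33e]
    field_simp
    have hne' : 1 + A22 * c ^ 2 ≠ 0 := by intro h; apply hne; linear_combination h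
    field_simp
    ring
  have hA2q : Bf (a 2) q = A22 / A33 := by
    rw [hq]
    simp only [map_sub, _root_.map_smul, LinearMap.sub_apply, LinearMap.smul_apply,
      smul_eq_mul, hGram, hsym32, ← hA22, ← hA23, ← hA33]
    rw [h23, h33e]
    field_simp
    have hne' : 1 + A22 * c ^ 2 ≠ 0 := by intro h; apply hne; linear_combination h
    field_simp
    ring
  have hqA2 : Bf q (a 2) = A22 / A33 := by rw [hsymm]; exact hA2q
  have hqq0 : Bf q q < 0 := by
    rw [hqq]; exact div_neg_of_neg_of_pos h22 h33
  refine ⟨hqq, hqq0, ?_⟩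
  -- abbreviations for the square roots
  set s : ℝ := Real.sqrt (-A22) with hs
  set r : ℝ := Real.sqrt (1 / A33) with hr
  have hA22pos : 0 < -A22 := by linarith
  have hspos : 0 < s := Real.sqrt_pos.mpr hA22pos
  have hss : s * s = -A22 := Real.mul_self_sqrt (le_of_lt hA22pos)
  have htv : Real.sqrt (-(Bf q q)) = Real.sqrt (-(A22 / A33)) := by rw [hqq]
  set t : ℝ := Real.sqrt (-(A22 / A33)) with ht
  have hqq33 : 0 < -(A22 / A33) := by
    have := div_neg_of_neg_of_pos h22 h33; linarith
  have htpos : 0 < t := Real.sqrt_pos.mpr hqq33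
  have htt : t * t = -(A22 / A33) := Real.mul_self_sqrt (le_of_lt hqq33)
  have htt' : t * t * A33 = -A22 := by rw [htt]; field_simp
  have hrpos : 0 < r := Real.sqrt_pos.mpr (by positivity)
  have hrr : r * r = 1 / A33 := Real.mul_self_sqrt (by positivity)
  have hst : s * t = (-A22) * r := by
    rw [hs, ht, ← Real.sqrt_mul (le_of_lt hA22pos),
      show (-A22) * (-(A22 / A33)) = A22 ^ 2 * (1 / A33) by ring,
      Real.sqrt_mul (sq_nonneg _), Real.sqrt_sq_eq_abs, abs_of_neg h22, hr]
  clear_value s t r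
  have T1 : s⁻¹ * (s⁻¹ * A22) = -1 := by
    field_simp
    linarith [hss]
  have hrr' : r * r * A33 = 1 := by rw [hrr]; field_simp
  have T4 : t⁻¹ * (t⁻¹ * (A22 / A33)) = -1 := by
    field_simp
    linarith [htt']
  have C1 : s⁻¹ * (t⁻¹ * (A22 / A33)) = -r := by
    rw [← mul_assoc, ← mul_inv, hst]
    have hA22ne : A22 ≠ 0 := ne_of_lt h22
    have hrne : r ≠ 0 := ne_of_gt hrpos
    rw [mul_inv]
    field_simp
    linear_combination hrr'
  have C2 : t⁻¹ * (s⁻¹ * (A22 / A33)) = -r := by rw [← C1]; ring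
  rw [hk, htv]
  simp only [map_add, _root_.map_smul, LinearMap.add_apply, LinearMap.smul_apply,
    smul_eq_mul, hGram, hA2q, hqA2, hqq, ← hA22]
  rw [mul_add, mul_add, T1, T4, C1, C2]
  ring
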